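/- For the metric of Lemma 3.1 built from an algebraic curvature tensor R², the curvature components with exactly one index in a t-direction satisfy R(∂u_a, ∂u_b, ∂u_c, ∂t_i) = ½(ψ̃_{acbi} − ψ̃_{bcai}) = R²_{abci}, where ψ_{abcd} = −(2/3)(R²_{acdb} + R²_{adcb}). -/

import Mathlib

open scoped BigOperators

/-- Coordinate indices on `ℝ^{3s}`: `(0, a) = u_a`, `(1, a) = v_a`, `(2, a) = t_a`. -/
abbrev CIdx (s : ℕ) := Fin 3 × Fin s

/-- A (component-level) algebraic curvature tensor. -/
def IsACT {ι : Type*} (F : ι → ι → ι → ι → ℝ) : Prop :=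
  (∀ x y z w, F x y z w = - F y x z w) ∧
  (∀ x y z w, F x y z w = F z w x y) ∧
  (∀ x y z w, F x y z w + F y z x w + F z x y w = 0)

/-- `ψ_{abcd} := -(2/3)(R²_{acdb} + R²_{adcb})`. -/
noncomputable def psi {s : ℕ} (R2 : Fin s → Fin s → Fin s → Fin s → ℝ) (a b c d : Fin s) : ℝ :=
  -(2 / 3) * (R2 a c d b + R2 a d c b)

/-- The metric of Lemma 3.1 at the point `p`:
`g(∂u_a, ∂u_b) = Σ_{c,d} ψ_{abcd} u_c t_d`, `g(∂u_a, ∂v_b) = δ_{ab}`,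
`g(∂t_a, ∂t_b) = -δ_{ab}`, all other components zero. -/
noncomputable def gMet {s : ℕ} (R2 : Fin s → Fin s → Fin s → Fin s → ℝ) (p : CIdx s → ℝ) :
    CIdx s → CIdx s → ℝ :=
  fun x y =>
    if x.1 = 0 ∧ y.1 = 0 then
      ∑ c, ∑ d, psi R2 x.2 y.2 c d * p ((0 : Fin 3), c) * p ((2 : Fin 3), d)
    else if (x.1 = 0 ∧ y.1 = 1) ∨ (x.1 = 1 ∧ y.1 = 0) then (if x.2 = y.2 then 1 else 0)
    else if x.1 = 2 ∧ y.1 = 2 then (if x.2 = y.2 then (-1 : ℝ) else 0)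
    else 0

/-- Christoffel symbols of the first kind
`Γ_{xyz} = ½(∂_x g_{yz} + ∂_y g_{xz} - ∂_z g_{xy})`. -/
noncomputable def Gamma1 {s : ℕ} (R2 : Fin s → Fin s → Fin s → Fin s → ℝ) (p : CIdx s → ℝ)
    (x y z : CIdx s) : ℝ :=
  (fderiv ℝ (fun q => gMet R2 q y z) p (Pi.single x 1)
    + fderiv ℝ (fun q => gMet R2 q x z) p (Pi.single y 1)
    - fderiv ℝ (fun q => gMet R2 q x y) p (Pi.single z 1)) / 2

/-- Christoffel symbols with raised third index:
`Γ_{xy}{}^z = Σ_w g^{zw} Γ_{xyw}`, `g^{..}` the inverse metric. -/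
noncomputable def Gamma2 {s : ℕ} (R2 : Fin s → Fin s → Fin s → Fin s → ℝ) (p : CIdx s → ℝ)
    (x y z : CIdx s) : ℝ :=
  ∑ w, (Matrix.of (gMet R2 p))⁻¹ z w * Gamma1 R2 p x y w

/-- The Riemann curvature tensor
`R_{r₁r₂r₃r₄} = ∂_{r₁}Γ_{r₂r₃r₄} - ∂_{r₂}Γ_{r₁r₃r₄}
  + Σ_{r₅} Γ_{r₁r₅r₄} Γ_{r₂r₃}{}^{r₅} - Σ_{r₅} Γ_{r₂r₅r₄} Γ_{r₁r₃}{}^{r₅}`. -/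
noncomputable def Riem {s : ℕ} (R2 : Fin s → Fin s → Fin s → Fin s → ℝ)
    (p : CIdx s → ℝ) (r1 r2 r3 r4 : CIdx s) : ℝ :=
  fderiv ℝ (fun q => Gamma1 R2 q r2 r3 r4) p (Pi.single r1 1)
    - fderiv ℝ (fun q => Gamma1 R2 q r1 r3 r4) p (Pi.single r2 1)
    + ∑ r5, Gamma1 R2 p r1 r5 r4 * Gamma2 R2 p r2 r3 r5
    - ∑ r5, Gamma1 R2 p r2 r5 r4 * Gamma2 R2 p r1 r3 r5

/-! ### Auxiliary lemmas -/

section helpers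
variable {s : ℕ} (R2 : Fin s → Fin s → Fin s → Fin s → ℝ)

/-- The derivative (as a continuous linear map) of the `uu`-component of the metric. -/
noncomputable def Lg (b c : Fin s) (p : CIdx s → ℝ) : (CIdx s → ℝ) →L[ℝ] ℝ :=
  ∑ e, ∑ d, ((psi R2 b c e d * p ((0 : Fin 3), e)) • ContinuousLinearMap.proj ((2 : Fin 3), d)
    + p ((2 : Fin 3), d) • ((psi R2 b c e d) • ContinuousLinearMap.proj ((0 : Fin 3), e)))

lemma hasFDerivAt_g_uu (b c : Fin s) (p : CIdx s → ℝ) :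
    HasFDerivAt (fun q => gMet R2 q ((0 : Fin 3), b) ((0 : Fin 3), c)) (Lg R2 b c p) p := by
  have h : (fun q : CIdx s → ℝ => gMet R2 q ((0 : Fin 3), b) ((0 : Fin 3), c)) =
      fun q => ∑ e, ∑ d, psi R2 b c e d * q ((0 : Fin 3), e) * q ((2 : Fin 3), d) := by
    funext q; simp [gMet]
  rw [h, Lg]
  refine HasFDerivAt.fun_sum fun e _ => HasFDerivAt.fun_sum fun d _ => ?_
  have h1 := hasFDerivAt_apply (𝕜 := ℝ) ((0 : Fin 3), e) p
  have h2 := hasFDerivAt_apply (𝕜 := ℝ) ((2 : Fin 3), d) p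
  exact (h1.const_mul (psi R2 b c e d)).mul h2

lemma Lg_apply_t (b c i : Fin s) (p : CIdx s → ℝ) :
    Lg R2 b c p (Pi.single ((2 : Fin 3), i) 1) = ∑ e, psi R2 b c e i * p ((0 : Fin 3), e) := by
  simp [Lg, ContinuousLinearMap.sum_apply, Pi.single_apply, Prod.ext_iff]

lemma Lg_apply_u (b c a : Fin s) (p : CIdx s → ℝ) :
    Lg R2 b c p (Pi.single ((0 : Fin 3), a) 1) = ∑ d, psi R2 b c a d * p ((2 : Fin 3), d) := by
  simp [Lg, ContinuousLinearMap.sum_apply, Pi.single_apply, Prod.ext_iff, mul_comm]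

lemma Lg_apply_v (b c f : Fin s) (p : CIdx s → ℝ) :
    Lg R2 b c p (Pi.single ((1 : Fin 3), f) 1) = 0 := by
  simp [Lg, ContinuousLinearMap.sum_apply, Pi.single_apply, Prod.ext_iff]

lemma fderiv_g_const (y z : CIdx s) (h : ¬(y.1 = 0 ∧ z.1 = 0)) (p : CIdx s → ℝ) :
    fderiv ℝ (fun q : CIdx s → ℝ => gMet R2 q y z) p = 0 := by
  have h0 : (fun q : CIdx s → ℝ => gMet R2 q y z) = fun _ => gMet R2 0 y z := by
    funext q; simp only [gMet, if_neg h]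
  rw [h0, fderiv_fun_const]
  rfl

lemma fderiv_g_uu (b c : Fin s) (p : CIdx s → ℝ) :
    fderiv ℝ (fun q : CIdx s → ℝ => gMet R2 q ((0 : Fin 3), b) ((0 : Fin 3), c)) p
      = Lg R2 b c p :=
  (hasFDerivAt_g_uu R2 b c p).fderiv

lemma ne2 {c i : Fin s} : ¬(((0 : Fin 3), c).1 = 0 ∧ ((2 : Fin 3), i).1 = 0) :=
  fun h => (by decide : ¬((2 : Fin 3) = 0)) h.2
lemma ne1 {c i : Fin s} : ¬(((0 : Fin 3), c).1 = 0 ∧ ((1 : Fin 3), i).1 = 0) :=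
  fun h => (by decide : ¬((1 : Fin 3) = 0)) h.2
lemma ne12 {c i : Fin s} : ¬(((1 : Fin 3), c).1 = 0 ∧ ((2 : Fin 3), i).1 = 0) :=
  fun h => (by decide : ¬((1 : Fin 3) = 0)) h.1
lemma ne22 {c i : Fin s} : ¬(((2 : Fin 3), c).1 = 0 ∧ ((2 : Fin 3), i).1 = 0) :=
  fun h => (by decide : ¬((2 : Fin 3) = 0)) h.1

lemma gamma1_uut (b c i : Fin s) (q : CIdx s → ℝ) :
    Gamma1 R2 q ((0 : Fin 3), b) ((0 : Fin 3), c) ((2 : Fin 3), i)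
      = -(∑ e, psi R2 b c e i * q ((0 : Fin 3), e)) / 2 := by
  rw [Gamma1, fderiv_g_const R2 _ _ ne2, fderiv_g_const R2 _ _ ne2,
    fderiv_g_uu, Lg_apply_t]
  simp

lemma gamma1_uuv (b c f : Fin s) (q : CIdx s → ℝ) :
    Gamma1 R2 q ((0 : Fin 3), b) ((0 : Fin 3), c) ((1 : Fin 3), f) = 0 := by
  rw [Gamma1, fderiv_g_const R2 _ _ ne1, fderiv_g_const R2 _ _ ne1,
    fderiv_g_uu, Lg_apply_v]
  simp

lemma gamma1_uvt (a f i : Fin s) (q : CIdx s → ℝ) :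
    Gamma1 R2 q ((0 : Fin 3), a) ((1 : Fin 3), f) ((2 : Fin 3), i) = 0 := by
  rw [Gamma1, fderiv_g_const R2 _ _ ne12, fderiv_g_const R2 _ _ ne2,
    fderiv_g_const R2 _ _ ne1]
  simp

lemma gamma1_utt (a j i : Fin s) (q : CIdx s → ℝ) :
    Gamma1 R2 q ((0 : Fin 3), a) ((2 : Fin 3), j) ((2 : Fin 3), i) = 0 := by
  rw [Gamma1, fderiv_g_const R2 _ _ ne22, fderiv_g_const R2 _ _ ne2,
    fderiv_g_const R2 _ _ ne2]
  simp

end helpers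

/-- The explicit inverse of the metric. -/
noncomputable def ginv {s : ℕ} (R2 : Fin s → Fin s → Fin s → Fin s → ℝ) (p : CIdx s → ℝ) :
    Matrix (CIdx s) (CIdx s) ℝ :=
  Matrix.of fun x y =>
    if x.1 = 0 ∧ y.1 = 1 then (if x.2 = y.2 then 1 else 0)
    else if x.1 = 1 ∧ y.1 = 0 then (if x.2 = y.2 then 1 else 0)
    else if x.1 = 1 ∧ y.1 = 1 then
      -(∑ c, ∑ d, psi R2 x.2 y.2 c d * p ((0 : Fin 3), c) * p ((2 : Fin 3), d))
    else if x.1 = 2 ∧ y.1 = 2 then (if x.2 = y.2 then -1 else 0)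
    else 0

lemma gMet_mul_ginv {s : ℕ} (R2 : Fin s → Fin s → Fin s → Fin s → ℝ) (p : CIdx s → ℝ) :
    Matrix.of (gMet R2 p) * ginv R2 p = 1 := by
  ext ⟨x1, x2⟩ ⟨y1, y2⟩
  rw [Matrix.mul_apply, Fintype.sum_prod_type, Fin.sum_univ_three]
  fin_cases x1 <;> fin_cases y1 <;>
    simp [gMet, ginv, Matrix.one_apply, Prod.ext_iff, Finset.mul_sum, mul_comm,
      Finset.sum_ite_eq, Finset.sum_ite_eq']

lemma gMet_inv {s : ℕ} (R2 : Fin s → Fin s → Fin s → Fin s → ℝ) (p : CIdx s → ℝ) :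
    (Matrix.of (gMet R2 p))⁻¹ = ginv R2 p :=
  Matrix.inv_eq_right_inv (gMet_mul_ginv R2 p)

section helpers3
variable {s : ℕ} (R2 : Fin s → Fin s → Fin s → Fin s → ℝ)

lemma gamma2_uuu (b c e : Fin s) (p : CIdx s → ℝ) :
    Gamma2 R2 p ((0 : Fin 3), b) ((0 : Fin 3), c) ((0 : Fin 3), e) = 0 := by
  rw [Gamma2, gMet_inv, Fintype.sum_prod_type, Fin.sum_univ_three]
  simp [ginv, gamma1_uuv]

lemma fderiv_gamma1_uut (b c i a : Fin s) (p : CIdx s → ℝ) :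
    fderiv ℝ (fun q => Gamma1 R2 q ((0 : Fin 3), b) ((0 : Fin 3), c) ((2 : Fin 3), i)) p
      (Pi.single ((0 : Fin 3), a) 1) = -psi R2 b c a i / 2 := by
  have hfun : (fun q : CIdx s → ℝ =>
      Gamma1 R2 q ((0 : Fin 3), b) ((0 : Fin 3), c) ((2 : Fin 3), i))
      = fun q => (2 : ℝ)⁻¹ * (-(∑ e, psi R2 b c e i * q ((0 : Fin 3), e))) :=
    funext fun q => by rw [gamma1_uut]; ring
  have H := ((HasFDerivAt.fun_sum (u := Finset.univ)
    (fun e _ => ((hasFDerivAt_apply (𝕜 := ℝ) ((0 : Fin 3), e) p).const_mul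
      (psi R2 b c e i)))).fun_neg.const_mul ((2 : ℝ)⁻¹))
  rw [hfun, H.fderiv]
  simp [ContinuousLinearMap.sum_apply, Pi.single_apply, Prod.ext_iff]
  ring

end helpers3

/-- For an algebraic curvature tensor, antisymmetry in the last pair of indices. -/
lemma IsACT.antisym_last {ι : Type*} {F : ι → ι → ι → ι → ℝ} (h : IsACT F)
    (x y z w : ι) : F x y z w = - F x y w z := by
  obtain ⟨hA, hP, hB⟩ := h
  linarith [hB x y z w, hB y z w x, hB z w x y, hB w x y z,
    hP x y z w, hP y z x w, hP z x y w, hP y z w x, hP z w y x, hP w y z x,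
    hP z w x y, hP w x z y, hP x z w y, hP w x y z, hP x y w z, hP y w x z,
    hA x y z w, hA x y w z, hA y z x w, hA z x y w, hA y w x z, hA w y z x,
    hA z x w y, hA x z w y, hA w y x z]

/-- for the metric of Lemma 3.1 built from an algebraic
curvature tensor `R²`, the curvature components with exactly one `t`-index
satisfy `R(∂u_a, ∂u_b, ∂u_c, ∂t_i) = ½(ψ_{acbi} - ψ_{bcai}) = R²_{abci}`. -/
theorem stmt12 (s : ℕ) (hs : 2 ≤ s)
    (R2 : Fin s → Fin s → Fin s → Fin s → ℝ) (h2 : IsACT R2)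
    (p : CIdx s → ℝ) (a b c i : Fin s) :
    Riem R2 p ((0 : Fin 3), a) ((0 : Fin 3), b) ((0 : Fin 3), c) ((2 : Fin 3), i) =
      (psi R2 a c b i - psi R2 b c a i) / 2 ∧
    Riem R2 p ((0 : Fin 3), a) ((0 : Fin 3), b) ((0 : Fin 3), c) ((2 : Fin 3), i) =
      R2 a b c i := by
  have hsum1 : ∑ r5, Gamma1 R2 p ((0 : Fin 3), a) r5 ((2 : Fin 3), i)
      * Gamma2 R2 p ((0 : Fin 3), b) ((0 : Fin 3), c) r5 = 0 := by
    rw [Fintype.sum_prod_type, Fin.sum_univ_three]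
    simp [gamma1_uvt, gamma1_utt, gamma2_uuu]
  have hsum2 : ∑ r5, Gamma1 R2 p ((0 : Fin 3), b) r5 ((2 : Fin 3), i)
      * Gamma2 R2 p ((0 : Fin 3), a) ((0 : Fin 3), c) r5 = 0 := by
    rw [Fintype.sum_prod_type, Fin.sum_univ_three]
    simp [gamma1_uvt, gamma1_utt, gamma2_uuu]
  have h1 : Riem R2 p ((0 : Fin 3), a) ((0 : Fin 3), b) ((0 : Fin 3), c) ((2 : Fin 3), i) =
      (psi R2 a c b i - psi R2 b c a i) / 2 := by
    rw [Riem, hsum1, hsum2, fderiv_gamma1_uut, fderiv_gamma1_uut]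
    ring
  refine ⟨h1, h1.trans ?_⟩
  obtain ⟨hA, hP, hB⟩ := h2
  have hL := IsACT.antisym_last ⟨hA, hP, hB⟩
  simp only [psi]
  linarith [hB a i b c, hA b a i c, hA a b i c, hL a b i c, hP a i b c, hP b i a c,
    hP i b a c, hA i b a c, hL a b c i]
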